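/- Let n ≥ 5 be an odd integer and let T = DC((n-3)/2, (n-3)/2, 3). Then the multiset of eigenvalues of the adjacency matrix of T is {√((n+1)/2), -√((n+1)/2), √((n-3)/2), -√((n-3)/2)} together with the eigenvalue 0 with multiplicity n - 4. -/
import Mathlib


open scoped Classical

/-- Adjacency matrix of a simple graph on `Fin n`, over `ℝ`. -/
noncomputable def adjMat {n : ℕ} (G : SimpleGraph (Fin n)) : Matrix (Fin n) (Fin n) ℝ :=
  fun i j => if G.Adj i j then 1 else 0

/-- The eigenvalues (roots of the characteristic polynomial, with multiplicity)
of the adjacency matrix, sorted in nondecreasing order. -/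
noncomputable def eigList {n : ℕ} (G : SimpleGraph (Fin n)) : List ℝ :=
  (Matrix.charpoly (adjMat G)).roots.sort (· ≤ ·)

/-- `lam k G` is the `k`-th largest adjacency eigenvalue of `G` (so `lam 1` is `λ₁`). -/
noncomputable def lam {n : ℕ} (k : ℕ) (G : SimpleGraph (Fin n)) : ℝ :=
  (eigList G).getD (n - k) 0

/-- The double comet `DC(k1, k2, l)`: a path on `l` vertices (the vertices `0, …, l-1`),
with `k1` pendant leaves attached to the terminal vertex `0` and `k2` pendant leaves
attached to the terminal vertex `l - 1`. -/
def doubleComet (k1 k2 l : ℕ) : SimpleGraph (Fin (k1 + k2 + l)) :=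
  SimpleGraph.fromRel (fun i j =>
    ((i : ℕ) + 1 = (j : ℕ) ∧ (j : ℕ) < l) ∨
    (l ≤ (i : ℕ) ∧ (i : ℕ) < l + k1 ∧ (j : ℕ) = 0) ∨
    (l + k1 ≤ (i : ℕ) ∧ (j : ℕ) = l - 1))

/-- Degree of a vertex. -/
noncomputable def deg {n : ℕ} (G : SimpleGraph (Fin n)) (u : Fin n) : ℕ :=
  (Finset.univ.filter (fun w => G.Adj u w)).card
open Polynomial Matrix

lemma eval_charpoly' {m : ℕ} (M : Matrix (Fin m) (Fin m) ℝ) (x : ℝ) :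
    M.charpoly.eval x = (x • (1 : Matrix (Fin m) (Fin m) ℝ) - M).det := by
  rw [Matrix.charpoly, ← Polynomial.coe_evalRingHom, RingHom.map_det]
  congr 1
  ext i j
  simp [Matrix.charmatrix_apply, Matrix.one_apply, Matrix.diagonal_apply]
  split <;> simp_all

lemma dc_adj (k : ℕ) (a b : Fin (k+k+3)) :
    (doubleComet k k 3).Adj a b ↔ (a:ℕ) ≠ (b:ℕ) ∧
      ((((a:ℕ) + 1 = (b:ℕ) ∧ (b:ℕ) < 3) ∨ (3 ≤ (a:ℕ) ∧ (a:ℕ) < 3 + k ∧ (b:ℕ) = 0) ∨ (3 + k ≤ (a:ℕ) ∧ (b:ℕ) = 2)) ∨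
       (((b:ℕ) + 1 = (a:ℕ) ∧ (a:ℕ) < 3) ∨ (3 ≤ (b:ℕ) ∧ (b:ℕ) < 3 + k ∧ (a:ℕ) = 0) ∨ (3 + k ≤ (b:ℕ) ∧ (a:ℕ) = 2))) := by
  simp [doubleComet, SimpleGraph.fromRel_adj, Fin.ne_iff_vne]

noncomputable def Bmat (k : ℕ) : Matrix (Fin 3) (Fin (k+k)) ℝ :=
  fun i j => if (i = 0 ∧ (j:ℕ) < k) ∨ (i = 2 ∧ k ≤ (j:ℕ)) then 1 else 0

def Pmat : Matrix (Fin 3) (Fin 3) ℝ := !![0,1,0;1,0,1;0,1,0]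

noncomputable def emap (k : ℕ) : Fin 3 ⊕ Fin (k+k) ≃ Fin (k+k+3) :=
  (finSumFinEquiv).trans (finCongr (by omega))

lemma emap_inl (k : ℕ) (i : Fin 3) : ((emap k (Sum.inl i) : Fin (k+k+3)) : ℕ) = (i : ℕ) := by
  simp [emap]

lemma emap_inr (k : ℕ) (j : Fin (k+k)) : ((emap k (Sum.inr j) : Fin (k+k+3)) : ℕ) = 3 + (j : ℕ) := by
  simp [emap]; omega

lemma block_decomp (k : ℕ) (hk : 1 ≤ k) (x : ℝ) :
    (x • (1 : Matrix (Fin (k+k+3)) (Fin (k+k+3)) ℝ) - adjMat (doubleComet k k 3)).submatrix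
        (emap k) (emap k)
      = Matrix.fromBlocks (x • 1 - Pmat) (-(Bmat k)) (-(Bmat k)ᵀ) (x • 1) := by
  ext i j
  have key : ∀ s t : Fin 3 ⊕ Fin (k+k),
      (x • (1 : Matrix (Fin (k+k+3)) (Fin (k+k+3)) ℝ) - adjMat (doubleComet k k 3)) (emap k s) (emap k t)
        = (if s = t then x else 0) - (if (doubleComet k k 3).Adj (emap k s) (emap k t) then 1 else 0) := by
    intro s t
    simp [Matrix.sub_apply, Matrix.smul_apply, Matrix.one_apply, adjMat,
      (emap k).injective.eq_iff, smul_eq_mul, mul_ite, mul_one, mul_zero]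
  cases i with
  | inl i =>
    cases j with
    | inl j =>
      rw [Matrix.submatrix_apply, key]
      rw [dc_adj]
      simp only [emap_inl]
      fin_cases i <;> fin_cases j <;>
        simp [Pmat, Matrix.one_apply, Fin.ext_iff] <;> omega
    | inr j =>
      rw [Matrix.submatrix_apply, key]
      rw [dc_adj]
      simp only [emap_inl, emap_inr]
      have h1 : ¬ (Sum.inl i = (Sum.inr j : Fin 3 ⊕ Fin (k+k))) := by simp
      rw [if_neg h1]
      simp only [Matrix.fromBlocks_apply₁₂, Matrix.neg_apply, Bmat]
      have hj := j.isLt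
      have hi := i.isLt
      by_cases hc : (i = 0 ∧ (j:ℕ) < k) ∨ (i = 2 ∧ k ≤ (j:ℕ))
      · rw [if_pos hc, if_pos]
        · ring
        · constructor
          · omega
          · rcases hc with ⟨h0, hjk⟩ | ⟨h2, hjk⟩
            · right; right; left
              refine ⟨by omega, by omega, by simp [h0]⟩
            · right; right; right
              refine ⟨by omega, by simp [h2]⟩
      · rw [if_neg hc, if_neg]
        · ring
        · push_neg at hc
          rintro ⟨hne, h | h⟩ <;> rcases h with h | h | h
          · omega
          · omega
          · omega
          · omega
          · exact absurd (hc.1 (by omega : i = 0)) (by omega)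
          · exact absurd (hc.2 (by omega : i = 2)) (by omega)
  | inr i =>
    cases j with
    | inl j =>
      rw [Matrix.submatrix_apply, key]
      rw [dc_adj]
      simp only [emap_inl, emap_inr]
      have h1 : ¬ (Sum.inr i = (Sum.inl j : Fin 3 ⊕ Fin (k+k))) := by simp
      rw [if_neg h1]
      simp only [Matrix.fromBlocks_apply₂₁, Matrix.neg_apply, Matrix.transpose_apply, Bmat]
      have hj := j.isLt
      have hi := i.isLt
      by_cases hc : (j = 0 ∧ (i:ℕ) < k) ∨ (j = 2 ∧ k ≤ (i:ℕ))
      · rw [if_pos hc, if_pos]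
        · ring
        · constructor
          · omega
          · rcases hc with ⟨h0, hjk⟩ | ⟨h2, hjk⟩
            · left; right; left
              refine ⟨by omega, by omega, by simp [h0]⟩
            · left; right; right
              refine ⟨by omega, by simp [h2]⟩
      · rw [if_neg hc, if_neg]
        · ring
        · push_neg at hc
          rintro ⟨hne, h | h⟩ <;> rcases h with h | h | h
          · omega
          · exact absurd (hc.1 (by omega : j = 0)) (by omega)
          · exact absurd (hc.2 (by omega : j = 2)) (by omega)
          · omega
          · omega
          · omega
    | inr j =>
      rw [Matrix.submatrix_apply, key]
      rw [dc_adj]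
      simp only [emap_inr]
      have h2 : ((Sum.inr i : Fin 3 ⊕ Fin (k+k)) = Sum.inr j) ↔ i = j := by simp
      rw [if_congr h2 rfl rfl]
      have hA : ¬ ((3 + (i:ℕ) ≠ 3 + (j:ℕ)) ∧
          (((3 + (i:ℕ) + 1 = 3 + (j:ℕ) ∧ 3 + (j:ℕ) < 3) ∨ (3 ≤ 3 + (i:ℕ) ∧ 3 + (i:ℕ) < 3 + k ∧ 3 + (j:ℕ) = 0) ∨ (3 + k ≤ 3 + (i:ℕ) ∧ 3 + (j:ℕ) = 2)) ∨
           ((3 + (j:ℕ) + 1 = 3 + (i:ℕ) ∧ 3 + (i:ℕ) < 3) ∨ (3 ≤ 3 + (j:ℕ) ∧ 3 + (j:ℕ) < 3 + k ∧ 3 + (i:ℕ) = 0) ∨ (3 + k ≤ 3 + (j:ℕ) ∧ 3 + (i:ℕ) = 2)))) := by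
        omega
      rw [if_neg hA]
      simp [Matrix.one_apply, Fin.ext_iff]


noncomputable def Qmat (k : ℕ) : Matrix (Fin 3) (Fin 3) ℝ :=
  fun i j => if (i = 0 ∧ j = 0) ∨ (i = 2 ∧ j = 2) then (k:ℝ) else 0

lemma BBt (k : ℕ) : Bmat k * (Bmat k)ᵀ = Qmat k := by
  ext i j
  rw [Matrix.mul_apply]
  fin_cases i <;> fin_cases j <;>
    simp [Bmat, Qmat, Matrix.transpose_apply, Fin.ext_iff] <;>
    rw [Fin.sum_univ_add] <;>
    simp [Fin.is_lt] <;>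
    first
      | simp [Finset.filter_eq_empty_iff, Nat.not_le, Fin.is_lt]
      | (refine Finset.sum_eq_zero fun x _ => ?_
         have := x.is_lt
         split_ifs <;> first | omega | rfl)

lemma charpoly_DC (k : ℕ) (hk : 1 ≤ k) :
    (adjMat (doubleComet k k 3)).charpoly
      = X ^ (k + k - 1) * (X ^ 2 - C ((k:ℝ) + 2)) * (X ^ 2 - C (k:ℝ)) := by
  apply Polynomial.eq_of_infinite_eval_eq
  apply Set.Infinite.mono (s := {(0:ℝ)}ᶜ)
  swap
  · exact Set.Finite.infinite_compl (Set.finite_singleton 0)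
  intro x hx
  have hx0 : x ≠ 0 := by simpa using hx
  show Polynomial.eval x _ = Polynomial.eval x _
  rw [eval_charpoly']
  rw [← Matrix.det_submatrix_equiv_self (emap k), block_decomp k hk x]
  haveI hinv : Invertible (x • (1 : Matrix (Fin (k+k)) (Fin (k+k)) ℝ)) :=
    ⟨x⁻¹ • 1, by
      rw [Matrix.smul_mul, Matrix.mul_smul, Matrix.one_mul, smul_smul, inv_mul_cancel₀ hx0, one_smul], by
      rw [Matrix.smul_mul, Matrix.mul_smul, Matrix.one_mul, smul_smul, mul_inv_cancel₀ hx0, one_smul]⟩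
  rw [Matrix.det_fromBlocks₂₂]
  have hiO : (⅟(x • (1 : Matrix (Fin (k+k)) (Fin (k+k)) ℝ))) = x⁻¹ • 1 :=
    invOf_eq_right_inv (by
      rw [Matrix.smul_mul, Matrix.mul_smul, Matrix.one_mul, smul_smul, mul_inv_cancel₀ hx0, one_smul])
  rw [hiO]
  have hprod : (-(Bmat k)) * (x⁻¹ • (1 : Matrix (Fin (k+k)) (Fin (k+k)) ℝ)) * (-(Bmat k)ᵀ)
      = x⁻¹ • Qmat k := by
    simp only [Matrix.neg_mul, Matrix.mul_neg, neg_neg, Matrix.mul_smul, Matrix.mul_one,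
      Matrix.smul_mul, BBt, smul_neg]
  rw [hprod]
  rw [Matrix.det_smul, Matrix.det_one, mul_one]
  have hcard : Fintype.card (Fin (k+k)) = k + k := by simp
  rw [hcard]
  -- 3×3 determinant
  have h3 : (x • (1 : Matrix (Fin 3) (Fin 3) ℝ) - Pmat - x⁻¹ • Qmat k).det
      = (x - x⁻¹ * k) * (x * (x - x⁻¹ * k)) - 2 * (x - x⁻¹ * k) := by
    rw [Matrix.det_fin_three]
    simp [Pmat, Qmat, Matrix.one_apply, Fin.ext_iff]
    ring
  rw [h3]
  have hkk : k + k = (k + k - 1) + 1 := by omega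
  rw [hkk, pow_succ]
  simp only [Polynomial.eval_mul, Polynomial.eval_pow, Polynomial.eval_X,
    Polynomial.eval_sub, Polynomial.eval_C, Polynomial.eval_pow]
  rw [mul_assoc, mul_assoc]
  congr 1
  field_simp
  ring

/-- The spectrum (multiset of adjacency eigenvalues) of `DC((n-3)/2, (n-3)/2, 3)` for odd
`n ≥ 5` is `{±√((n+1)/2), ±√((n-3)/2)}` together with `0` of multiplicity `n - 4`. -/
theorem spectrum_balanced_DC_odd (n : ℕ) (hn : 5 ≤ n) (hodd : Odd n) :
    (Matrix.charpoly (adjMat (doubleComet ((n - 3) / 2) ((n - 3) / 2) 3))).roots =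
      {Real.sqrt (((n : ℝ) + 1) / 2), -Real.sqrt (((n : ℝ) + 1) / 2),
       Real.sqrt (((n : ℝ) - 3) / 2), -Real.sqrt (((n : ℝ) - 3) / 2)} +
      Multiset.replicate (n - 4) (0 : ℝ) := by
  obtain ⟨m, hm⟩ := hodd
  set k := (n - 3) / 2 with hkdef
  have hkn : n = k + k + 3 := by omega
  have hk1 : 1 ≤ k := by omega
  have hcast : (n : ℝ) = (k : ℝ) + (k : ℝ) + 3 := by exact_mod_cast congrArg (Nat.cast : ℕ → ℝ) hkn
  have e1 : ((n : ℝ) + 1) / 2 = (k : ℝ) + 2 := by rw [hcast]; ring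
  have e2 : ((n : ℝ) - 3) / 2 = (k : ℝ) := by rw [hcast]; ring
  rw [charpoly_DC k hk1]
  set s1 := Real.sqrt ((k:ℝ) + 2) with hs1
  set s2 := Real.sqrt ((k:ℝ)) with hs2
  have h1 : s1 * s1 = (k:ℝ) + 2 := Real.mul_self_sqrt (by positivity)
  have h2 : s2 * s2 = (k:ℝ) := Real.mul_self_sqrt (by positivity)
  have ha : (X ^ 2 - C ((k:ℝ) + 2)) = (X - C s1) * (X - C (-s1)) := by
    rw [← h1, Polynomial.C_mul, map_neg]; ring
  have hb : (X ^ 2 - C ((k:ℝ))) = (X - C s2) * (X - C (-s2)) := by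
    rw [← h2, Polynomial.C_mul, map_neg]; ring
  rw [ha, hb]
  have hX : (X : ℝ[X]) ^ (k + k - 1) ≠ 0 := pow_ne_zero _ Polynomial.X_ne_zero
  have hf1 : ((X : ℝ[X]) - C s1) ≠ 0 := Polynomial.X_sub_C_ne_zero _
  have hf2 : ((X : ℝ[X]) - C (-s1)) ≠ 0 := Polynomial.X_sub_C_ne_zero _
  have hf3 : ((X : ℝ[X]) - C s2) ≠ 0 := Polynomial.X_sub_C_ne_zero _
  have hf4 : ((X : ℝ[X]) - C (-s2)) ≠ 0 := Polynomial.X_sub_C_ne_zero _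
  rw [Polynomial.roots_mul (mul_ne_zero (mul_ne_zero hX (mul_ne_zero hf1 hf2)) (mul_ne_zero hf3 hf4)),
    Polynomial.roots_mul (mul_ne_zero hX (mul_ne_zero hf1 hf2)),
    Polynomial.roots_mul (mul_ne_zero hf1 hf2),
    Polynomial.roots_mul (mul_ne_zero hf3 hf4),
    Polynomial.roots_pow, Polynomial.roots_X,
    Polynomial.roots_X_sub_C, Polynomial.roots_X_sub_C,
    Polynomial.roots_X_sub_C, Polynomial.roots_X_sub_C]
  rw [e1, e2]
  rw [Multiset.nsmul_singleton, show k + k - 1 = n - 4 from by omega]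
  simp only [Multiset.insert_eq_cons, ← Multiset.singleton_add]
  abel
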